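/- Let n ≥ 3 and let α ∈ ℂ with |α| = 1. Let A be the n×n Hermitian matrix of the n-cycle with A_{j,j+1} = A_{j+1,j} = 1 for 1 ≤ j ≤ n−1, A_{1,n} = α, A_{n,1} = conj(α), and all other entries 0. Then det(A + 2I) = 2 − (−1)ⁿ·(α + conj(α)). -/

import Mathlib

open Matrix

/-- for the template 𝒬ₙ (uncharged n-cycle with one edge-weight α of
absolute value 1 and all other edge-weights 1), det(A + 2I) = 2 - (-1)ⁿ(α + conj α). -/
theorem stmt_8 (n : ℕ) (hn : 3 ≤ n) (α : ℂ) (hα : ‖α‖ = 1)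
    (A : Matrix (Fin n) (Fin n) ℂ)
    (hAdef : ∀ i j : Fin n, A i j =
      if (i : ℕ) = 0 ∧ (j : ℕ) = n - 1 then α
      else if (i : ℕ) = n - 1 ∧ (j : ℕ) = 0 then starRingEnd ℂ α
      else if (j : ℕ) = (i : ℕ) + 1 then 1
      else if (i : ℕ) = (j : ℕ) + 1 then 1
      else 0) :
    (A + (2 : ℂ) • (1 : Matrix (Fin n) (Fin n) ℂ)).det =
      2 - (-1) ^ n * (α + starRingEnd ℂ α) := by
  obtain ⟨m, rfl⟩ : ∃ m, n = m + 1 := ⟨n - 1, by omega⟩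
  have hm : 2 ≤ m := by omega
  -- the weighted cyclic shift
  set S : Matrix (Fin (m + 1)) (Fin (m + 1)) ℂ :=
    fun i k => if k = i + 1 then (if i = Fin.last m then starRingEnd ℂ α else 1) else 0 with hS
  have hlast : ∀ i : Fin (m + 1), i = Fin.last m ↔ (i : ℕ) = m := by
    intro i; rw [Fin.ext_iff, Fin.val_last]
  have hsucc : ∀ i j : Fin (m + 1), j = i + 1 ↔
      (((i : ℕ) = m ∧ (j : ℕ) = 0) ∨ ((i : ℕ) < m ∧ (j : ℕ) = (i : ℕ) + 1)) := by
    intro i j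
    have hi := i.isLt; have hj := j.isLt
    rw [Fin.ext_iff, Fin.val_add_one]
    split_ifs with h <;> rw [hlast] at h <;> omega
  have hαα : α * starRingEnd ℂ α = 1 := by
    rw [Complex.mul_conj, Complex.normSq_eq_norm_sq, hα]; norm_num
  -- A = S + Sᴴ
  have hA : A = S + Sᴴ := by
    ext i j
    rw [hAdef]
    have hi := i.isLt; have hj := j.isLt
    simp only [Matrix.add_apply, Matrix.conjTranspose_apply]
    simp only [hS,
      apply_ite (star : ℂ → ℂ), star_zero, star_one, Complex.star_def, Complex.conj_conj]
    simp only [hsucc, hlast]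
    split_ifs <;> first | ring1 | omega | simp_all | (simp_all; omega)
  -- S * Sᴴ = 1
  have hSS : S * Sᴴ = 1 := by
    ext i j
    rw [Matrix.mul_apply]
    have hterm : ∀ k, S i k * Sᴴ k j
        = if k = i + 1 then
            (if i = Fin.last m then starRingEnd ℂ α else 1) * starRingEnd ℂ (S j k) else 0 := by
      intro k
      simp only [Matrix.conjTranspose_apply]
      simp only [hS]
      split_ifs <;> simp
    rw [Finset.sum_congr rfl fun k _ => hterm k, Finset.sum_ite_eq' Finset.univ (i + 1)]
    simp only [Finset.mem_univ, if_true]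
    by_cases h : i = j
    · subst h
      simp only [hS, if_pos rfl, Matrix.one_apply_eq]
      split_ifs with h1
      · rw [Complex.conj_conj, mul_comm]; exact hαα
      · simp
    · have h1 : ¬ (i + 1 = j + 1) := fun hh => h (add_right_cancel hh)
      simp [hS, h1, Matrix.one_apply_ne h]
  -- factorization
  have hfac : A + (2 : ℂ) • (1 : Matrix (Fin (m + 1)) (Fin (m + 1)) ℂ)
      = (1 + S) * (1 + S)ᴴ := by
    rw [Matrix.conjTranspose_add, Matrix.conjTranspose_one, Matrix.add_mul, Matrix.one_mul,
      Matrix.mul_add, Matrix.mul_one, hSS, hA, two_smul]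
    abel
  have hE : ∀ x y : Fin (m + 1), (1 + S) x y
      = (if x = y then 1 else 0)
        + (if y = x + 1 then (if x = Fin.last m then starRingEnd ℂ α else 1) else 0) := by
    intro x y
    simp only [Matrix.add_apply, Matrix.one_apply]
    simp [hS]
  -- determinant of 1 + S
  have hd : (1 + S).det = 1 + (-1) ^ m * starRingEnd ℂ α := by
    rw [Matrix.det_succ_column_zero]
    have h0L : (0 : Fin (m + 1)) ≠ Fin.last m := by
      rw [ne_eq, Fin.ext_iff, Fin.val_zero, Fin.val_last]; omega
    have hzero : ∀ i ∈ Finset.univ, i ∉ ({0, Fin.last m} : Finset (Fin (m + 1))) →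
        (-1 : ℂ) ^ (i : ℕ) * (1 + S) i 0 * ((1 + S).submatrix i.succAbove Fin.succ).det = 0 := by
      intro i _ hi
      simp only [Finset.mem_insert, Finset.mem_singleton, not_or, Fin.ext_iff, Fin.val_zero,
        Fin.val_last] at hi
      have hiv := i.isLt
      have e1 : (1 + S) i 0 = 0 := by
        rw [hE]
        simp only [hsucc, Fin.ext_iff, Fin.val_zero, Fin.val_succ, Fin.coe_castSucc, Fin.val_last,
          eq_self_iff_true, and_true, true_and, and_false, false_and, or_false, false_or,
          or_true, true_or, if_true, if_false]
        split_ifs <;> first | ring1 | omega | simp_all | (simp_all; omega)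
      rw [e1]; ring
    rw [← Finset.sum_subset (Finset.subset_univ {0, Fin.last m}) hzero,
      Finset.sum_pair h0L]
    have e00 : (1 + S) 0 0 = 1 := by
      rw [hE]
      simp only [hsucc, Fin.ext_iff, Fin.val_zero, Fin.val_succ, Fin.coe_castSucc, Fin.val_last,
          eq_self_iff_true, and_true, true_and, and_false, false_and, or_false, false_or,
          or_true, true_or, if_true, if_false]
      split_ifs <;> first | ring1 | omega | simp_all | (simp_all; omega)
    have eL0 : (1 + S) (Fin.last m) 0 = starRingEnd ℂ α := by
      rw [hE]
      simp only [hsucc, Fin.ext_iff, Fin.val_zero, Fin.val_succ, Fin.coe_castSucc, Fin.val_last,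
          eq_self_iff_true, and_true, true_and, and_false, false_and, or_false, false_or,
          or_true, true_or, if_true, if_false]
      split_ifs <;> first | ring1 | omega | simp_all | (simp_all; omega)
    have d0 : ((1 + S).submatrix (Fin.succAbove 0) Fin.succ).det = 1 := by
      have ht : ((1 + S).submatrix (Fin.succAbove 0) Fin.succ).BlockTriangular id := by
        intro r c hrc
        have hrc' : (c : ℕ) < (r : ℕ) := hrc
        have hc := c.isLt
        simp only [Matrix.submatrix_apply, Fin.succAbove_zero]
        rw [hE]
        simp only [hsucc, Fin.ext_iff, Fin.val_zero, Fin.val_succ, Fin.coe_castSucc, Fin.val_last,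
          eq_self_iff_true, and_true, true_and, and_false, false_and, or_false, false_or,
          or_true, true_or, if_true, if_false]
        split_ifs <;> first | ring1 | omega | simp_all | (simp_all; omega)
      rw [Matrix.det_of_upperTriangular ht]
      apply Finset.prod_eq_one
      intro r _
      have hr := r.isLt
      simp only [Matrix.submatrix_apply, Fin.succAbove_zero]
      rw [hE]
      simp only [hsucc, Fin.ext_iff, Fin.val_zero, Fin.val_succ, Fin.coe_castSucc, Fin.val_last,
          eq_self_iff_true, and_true, true_and, and_false, false_and, or_false, false_or,
          or_true, true_or, if_true, if_false]
      split_ifs <;> first | ring1 | omega | simp_all | (simp_all; omega)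
    have dL : ((1 + S).submatrix (Fin.succAbove (Fin.last m)) Fin.succ).det = 1 := by
      have ht : ((1 + S).submatrix (Fin.succAbove (Fin.last m)) Fin.succ).BlockTriangular
          OrderDual.toDual := by
        intro r c hrc
        have hrc' : (r : ℕ) < (c : ℕ) := hrc
        have hc := c.isLt
        simp only [Matrix.submatrix_apply, Fin.succAbove_last]
        rw [hE]
        simp only [hsucc, Fin.ext_iff, Fin.val_zero, Fin.val_succ, Fin.coe_castSucc, Fin.val_last,
          eq_self_iff_true, and_true, true_and, and_false, false_and, or_false, false_or,
          or_true, true_or, if_true, if_false]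
        split_ifs <;> first | ring1 | omega | simp_all | (simp_all; omega)
      rw [Matrix.det_of_lowerTriangular _ ht]
      apply Finset.prod_eq_one
      intro r _
      have hr := r.isLt
      simp only [Matrix.submatrix_apply, Fin.succAbove_last]
      rw [hE]
      simp only [hsucc, Fin.ext_iff, Fin.val_zero, Fin.val_succ, Fin.coe_castSucc, Fin.val_last,
          eq_self_iff_true, and_true, true_and, and_false, false_and, or_false, false_or,
          or_true, true_or, if_true, if_false]
      split_ifs <;> first | ring1 | omega | simp_all | (simp_all; omega)
    rw [e00, eL0, d0, dL]
    simp only [Fin.val_zero, Fin.val_last, pow_zero]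
    ring1
  -- put it together
  rw [hfac, Matrix.det_mul, Matrix.det_conjTranspose, hd]
  simp only [star_add, star_one, star_mul', star_pow, star_neg, Complex.star_def,
    Complex.conj_conj, _root_.map_one]
  linear_combination ((-1 : ℂ)) ^ m * (-1) ^ m * hαα + (by rw [← mul_pow]; norm_num :
    ((-1 : ℂ)) ^ m * (-1) ^ m = 1)
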